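/- arXiv:2503.02664 — 5 statements merged into one kernel-verified Lean document; each statement's English description precedes it below -/
import Mathlib

section
/- Let u be a real irrational number and c1, c2, c3 integers with gcd(c1,c2,c3)=1 satisfying c1 + c2*u + c3*u^2 = 0. If integers d1, d2, d3 also satisfy d1 + d2*u + d3*u^2 = 0, then there exists an integer z such that d1 = z*c1, d2 = z*c2, and d3 = z*c3. -/
lemma lin_indep_int (u : ℝ) (hu : Irrational u) (a b : ℤ)
    (h : (a : ℝ) + b * u = 0) : a = 0 ∧ b = 0 := by
  by_cases hb : b = 0
  · subst hb
    simp at h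
    exact ⟨by exact_mod_cast h, rfl⟩
  · exfalso
    apply hu
    refine ⟨-a / b, ?_⟩
    have hb' : (b : ℝ) ≠ 0 := Int.cast_ne_zero.mpr hb
    push_cast
    field_simp
    linarith

theorem uniqueness_of_quadratic_equation
    (u : ℝ) (hu : Irrational u)
    (c1 c2 c3 : ℤ) (hgcd : Int.gcd c1 (Int.gcd c2 c3) = 1)
    (hc : (c1 : ℝ) + c2 * u + c3 * u ^ 2 = 0)
    (d1 d2 d3 : ℤ) (hd : (d1 : ℝ) + d2 * u + d3 * u ^ 2 = 0) :
    ∃ z : ℤ, d1 = z * c1 ∧ d2 = z * c2 ∧ d3 = z * c3 := by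
  have hu0 : u ≠ 0 := hu.ne_zero
  -- relation 1
  have e1 : (↑(c3 * d1 - c1 * d3) : ℝ) + (↑(c3 * d2 - c2 * d3) : ℝ) * u = 0 := by
    push_cast
    linear_combination (c3:ℝ)*hd - (d3:ℝ)*hc
  have r1 := lin_indep_int u hu _ _ e1
  have hA : c3 * d1 = c1 * d3 := by linarith [r1.1]
  have hB : c3 * d2 = c2 * d3 := by linarith [r1.2]
  -- relation 2: (c1*hd - d1*hc) = u * (stuff)
  have e2 : u * ((↑(c1 * d2 - c2 * d1) : ℝ) + (↑(c1 * d3 - c3 * d1) : ℝ) * u) = 0 := by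
    push_cast
    linear_combination (c1:ℝ)*hd - (d1:ℝ)*hc
  have e2' : (↑(c1 * d2 - c2 * d1) : ℝ) + (↑(c1 * d3 - c3 * d1) : ℝ) * u = 0 :=
    (mul_eq_zero.mp e2).resolve_left hu0
  have r2 := lin_indep_int u hu _ _ e2'
  have hC : c1 * d2 = c2 * d1 := by linarith [r2.1]
  -- Bezout
  have b1 := Int.gcd_eq_gcd_ab c2 c3
  have b2 := Int.gcd_eq_gcd_ab c1 (Int.gcd c2 c3)
  set x := Int.gcdA c1 (Int.gcd c2 c3)
  set w := Int.gcdB c1 (Int.gcd c2 c3)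
  set y := Int.gcdA c2 c3
  set v := Int.gcdB c2 c3
  have key : c1 * x + c2 * (y * w) + c3 * (v * w) = 1 := by
    have : (1 : ℤ) = c1 * x + (Int.gcd c2 c3 : ℤ) * w := by
      rw [← b2]; exact_mod_cast congrArg (fun n : ℕ => (n : ℤ)) hgcd.symm
    rw [this, b1]; ring
  refine ⟨x * d1 + y * w * d2 + v * w * d3, ?_, ?_, ?_⟩
  · linear_combination (-d1)*key - (y*w)*hC + (v*w)*hA
  · linear_combination (-d2)*key + x*hC + (v*w)*hB
  · linear_combination (-d3)*key - x*hA - (y*w)*hB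
end

section
/- If u is a real number with a periodic continued fraction expansion (i.e., u = [a_0, a_1, a_2, ...] with a_n = a_{n+p} for all n ≥ 0, some period p ≥ 1, and all a_i positive integers), then u is a quadratic irrational, i.e., u is irrational and there exist integers c1, c2, c3 not all zero with c1 + c2*u + c3*u^2 = 0. -/
open GenContFract

/-- Contraction estimate: two continued fraction expansions with the same
partial quotients are exponentially close. -/
theorem cf_contraction_aux : ∀ (m : ℕ) (a : ℕ → ℕ) (x y : ℕ → ℝ),
    (∀ n, 1 ≤ a n) →
    (∀ n, x n = a n + 1 / x (n + 1)) → (∀ n, 1 < x n) →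
    (∀ n, y n = a n + 1 / y (n + 1)) → (∀ n, 1 < y n) →
    |x 0 - y 0| ≤ (1 / 4 : ℝ) ^ m := by
  intro m
  induction m with
  | zero =>
    intro a x y ha hx hx1 hy hy1
    have hx1' : (0:ℝ) < x 1 := lt_trans one_pos (hx1 1)
    have hy1' : (0:ℝ) < y 1 := lt_trans one_pos (hy1 1)
    have h1 : 0 < 1 / x 1 := by positivity
    have h2 : 1 / x 1 < 1 := by
      rw [div_lt_one hx1']; exact hx1 1
    have h3 : 0 < 1 / y 1 := by positivity
    have h4 : 1 / y 1 < 1 := by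
      rw [div_lt_one hy1']; exact hy1 1
    have e1 : x 0 - y 0 = 1 / x 1 - 1 / y 1 := by
      rw [hx 0, hy 0]; ring
    rw [pow_zero, abs_le, e1]
    constructor <;> nlinarith
  | succ m ih =>
    intro a x y ha hx hx1 hy hy1
    have hx1' : (0:ℝ) < x 1 := lt_trans one_pos (hx1 1)
    have hy1' : (0:ℝ) < y 1 := lt_trans one_pos (hy1 1)
    have hx2' : (0:ℝ) < x 2 := lt_trans one_pos (hx1 2)
    have hy2' : (0:ℝ) < y 2 := lt_trans one_pos (hy1 2)
    have ha1 : (1:ℝ) ≤ a 1 := by exact_mod_cast ha 1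
    -- x 1 * x 2 ≥ 2
    have hxx : 2 ≤ x 1 * x 2 := by
      have := hx 1
      have h2 : x 1 * x 2 = (a 1 : ℝ) * x 2 + 1 := by
        rw [this]; field_simp
      nlinarith [hx1 2]
    have hyy : 2 ≤ y 1 * y 2 := by
      have := hy 1
      have h2 : y 1 * y 2 = (a 1 : ℝ) * y 2 + 1 := by
        rw [this]; field_simp
      nlinarith [hy1 2]
    have e1 : x 0 - y 0 = (x 2 - y 2) / (x 1 * y 1 * (x 2 * y 2)) := by
      rw [hx 0, hy 0, hx 1, hy 1]
      field_simp
      ring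
    have hD : (4:ℝ) ≤ x 1 * y 1 * (x 2 * y 2) := by nlinarith
    have hD0 : (0:ℝ) < x 1 * y 1 * (x 2 * y 2) := by positivity
    have habs : |x 0 - y 0| = |x 2 - y 2| / (x 1 * y 1 * (x 2 * y 2)) := by
      rw [e1, abs_div, abs_of_pos hD0]
    have hstep : |x 0 - y 0| ≤ |x 2 - y 2| / 4 := by
      rw [habs]
      exact div_le_div_of_nonneg_left (abs_nonneg _) (by norm_num) hD
    have hih : |x 2 - y 2| ≤ (1 / 4 : ℝ) ^ m :=
      ih (fun n => a (n + 2)) (fun n => x (n + 2)) (fun n => y (n + 2))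
        (fun n => ha (n + 2)) (fun n => hx (n + 2)) (fun n => hx1 (n + 2))
        (fun n => hy (n + 2)) (fun n => hy1 (n + 2))
    calc |x 0 - y 0| ≤ |x 2 - y 2| / 4 := hstep
      _ ≤ (1 / 4 : ℝ) ^ m / 4 := by linarith
      _ = (1 / 4 : ℝ) ^ (m + 1) := by ring

/-- A periodic continued fraction value is a quadratic irrational. -/
theorem periodic_cf_is_quadratic_irrational
    (a : ℕ → ℕ) (ha : ∀ n, 1 ≤ a n)
    (p : ℕ) (hp : 1 ≤ p) (hper : ∀ n, a (n + p) = a n)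
    (u : ℝ) (ξ : ℕ → ℝ)
    (hξ0 : ξ 0 = u)
    (hξrec : ∀ n, ξ n = a n + 1 / ξ (n + 1))
    (hξgt : ∀ n, 1 ≤ n → 1 < ξ n) :
    Irrational u ∧ ∃ c1 c2 c3 : ℤ,
      ¬(c1 = 0 ∧ c2 = 0 ∧ c3 = 0) ∧ (c1 : ℝ) + c2 * u + c3 * u ^ 2 = 0 := by
  -- every ξ n is > 1
  have hgt : ∀ n, 1 < ξ n := by
    intro n
    cases n with
    | zero =>
      have h1 : (1:ℝ) < ξ 1 := hξgt 1 le_rfl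
      have h1' : (0:ℝ) < ξ 1 := lt_trans one_pos h1
      have ha0 : (1:ℝ) ≤ a 0 := by exact_mod_cast ha 0
      have : (0:ℝ) < 1 / ξ 1 := by positivity
      rw [hξrec 0]; linarith
    | succ n => exact hξgt (n + 1) (Nat.le_add_left 1 n)
  have hpos : ∀ n, (0:ℝ) < ξ n := fun n => lt_trans one_pos (hgt n)
  have hfr : ∀ n, ξ n - a n = 1 / ξ (n + 1) := by
    intro n; rw [hξrec n]; ring
  have hfr_pos : ∀ n, 0 < ξ n - (a n : ℝ) := by
    intro n; rw [hfr n]; exact one_div_pos.mpr (hpos (n + 1))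
  have hfr_lt : ∀ n, ξ n - (a n : ℝ) < 1 := by
    intro n; rw [hfr n, div_lt_one (hpos (n+1))]; exact hgt (n+1)
  -- floor of ξ n is a n
  have hfloor : ∀ n, ⌊ξ n⌋ = (a n : ℤ) := by
    intro n
    rw [Int.floor_eq_iff]
    push_cast
    constructor
    · linarith [hfr_pos n]
    · linarith [hfr_lt n]
  -- the IntFractPair stream of u never terminates
  have hstream : ∀ n, IntFractPair.stream u n = some (IntFractPair.of (ξ n)) := by
    intro n
    induction n with
    | zero => rw [IntFractPair.stream_zero, hξ0]
    | succ n ih =>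
      have hfract : Int.fract (ξ n) = ξ n - (a n : ℝ) := by
        rw [← Int.self_sub_floor, hfloor n]
        push_cast
        ring
      have hfr_ne : (IntFractPair.of (ξ n)).fr ≠ 0 := by
        show Int.fract (ξ n) ≠ 0
        rw [hfract]
        exact ne_of_gt (hfr_pos n)
      have := IntFractPair.stream_succ_of_some ih hfr_ne
      rw [this]
      congr 1
      show IntFractPair.of (Int.fract (ξ n))⁻¹ = _
      rw [hfract, hfr n, one_div, inv_inv]
  have hirr : Irrational u := by
    by_contra hcon
    have hrat : ∃ q : ℚ, u = (q : ℝ) := by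
      rw [Irrational] at hcon
      push_neg at hcon
      obtain ⟨q, hq⟩ := hcon
      exact ⟨q, hq.symm⟩
    have hterm := (terminates_iff_rat u).mpr hrat
    obtain ⟨n, hn⟩ := hterm
    have hn' := of_terminatedAt_n_iff_succ_nth_intFractPair_stream_eq_none.mp hn
    rw [hstream (n + 1)] at hn'
    exact Option.some_ne_none _ hn'
  -- ξ p = u by uniqueness (contraction)
  have huniq : ξ 0 = ξ p := by
    have hbd : ∀ m : ℕ, |ξ 0 - ξ p| ≤ (1 / 4 : ℝ) ^ m := by
      intro m
      have hres := cf_contraction_aux m a ξ (fun n => ξ (n + p)) ha hξrec hgt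
        (fun n => by
          show ξ (n + p) = (a n : ℝ) + 1 / ξ (n + 1 + p)
          rw [← hper n, show n + 1 + p = n + p + 1 from by ring]
          exact hξrec (n + p))
        (fun n => hgt (n + p))
      simpa using hres
    have htend : Filter.Tendsto (fun m : ℕ => (1 / 4 : ℝ) ^ m) Filter.atTop (nhds 0) :=
      tendsto_pow_atTop_nhds_zero_of_lt_one (by norm_num) (by norm_num)
    have h0 : |ξ 0 - ξ p| ≤ 0 :=
      ge_of_tendsto htend (Filter.Eventually.of_forall hbd)
    have := abs_nonneg (ξ 0 - ξ p)
    have : |ξ 0 - ξ p| = 0 := le_antisymm h0 this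
    have := abs_eq_zero.mp this
    linarith
  have hup : ξ p = u := by rw [← huniq, hξ0]
  -- Möbius relation by induction
  have hmob : ∀ n, ∃ A B C D : ℕ,
      u * ((C : ℝ) * ξ n + D) = (A : ℝ) * ξ n + B ∧ (1 ≤ n → 1 ≤ C) ∧ 1 ≤ C + D := by
    intro n
    induction n with
    | zero =>
      exact ⟨1, 0, 0, 1, by push_cast; rw [hξ0]; ring, by omega, by omega⟩
    | succ n ih =>
      obtain ⟨A, B, C, D, h1, h2, h3⟩ := ih
      refine ⟨A * a n + B, A, C * a n + D, C, ?_, ?_, ?_⟩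
      · have ht : ξ (n + 1) ≠ 0 := ne_of_gt (hpos (n + 1))
        rw [hξrec n] at h1
        field_simp at h1 ⊢
        push_cast
        linear_combination h1
      · intro _
        have hca : C ≤ C * a n := Nat.le_mul_of_pos_right C (ha n)
        omega
      · have hca : C ≤ C * a n := Nat.le_mul_of_pos_right C (ha n)
        omega
  obtain ⟨A, B, C, D, h1, h2, h3⟩ := hmob p
  have hC : 1 ≤ C := h2 hp
  rw [hup] at h1
  refine ⟨hirr, -(B : ℤ), (D : ℤ) - A, (C : ℤ), ?_, ?_⟩
  · intro ⟨_, _, hc3⟩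
    omega
  · push_cast
    linear_combination h1
end

section
/- Let u = [a_0, a_1, ...] be an infinite continued fraction that is periodic with period p starting from index h (a_ν = a_{ν+p} for all ν ≥ h), with convergent numerators A_k and denominators B_k defined by the standard recursion. Writing g = h + p, u satisfies the quadratic equation c3*u^2 + c2*u + c1 = 0 where c3 = B_{h-2}*B_{g-1} - B_{h-1}*B_{g-2}, c2 = B_{h-1}*A_{g-2} + A_{h-1}*B_{g-2} - A_{h-2}*B_{g-1} - B_{h-2}*A_{g-1}, and c1 = A_{h-2}*A_{g-1} - A_{h-1}*A_{g-2}. -/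
/-- Quadratic equation for a pre-periodic continued fraction.  Indices are
shifted by `2`: `A k` here denotes `A_{k-2}` of the paper, so e.g.
`A_{h-1} = A (h+1)` and, with `g = h + p`, `B_{g-1} = B (g+1)`. -/
theorem preperiodic_cf_quadratic
    (a : ℕ → ℕ) (ha : ∀ k, 1 ≤ a k)
    (h p : ℕ) (hp : 1 ≤ p)
    (hper : ∀ ν, h ≤ ν → a (ν + p) = a ν)
    (A B : ℕ → ℝ)
    (hA0 : A 0 = 0) (hA1 : A 1 = 1)
    (hB0 : B 0 = 1) (hB1 : B 1 = 0)
    (hArec : ∀ k, A (k + 2) = a k * A (k + 1) + A k)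
    (hBrec : ∀ k, B (k + 2) = a k * B (k + 1) + B k)
    (u : ℝ) (ξ : ℕ → ℝ)
    (hξ0 : ξ 0 = u)
    (hξrec : ∀ k, ξ k = a k + 1 / ξ (k + 1))
    (hξgt : ∀ k, 1 ≤ k → 1 < ξ k)
    (hξper : ξ (h + p) = ξ h) :
    (B h * B (h + p + 1) - B (h + 1) * B (h + p)) * u ^ 2
      + (B (h + 1) * A (h + p) + A (h + 1) * B (h + p)
          - A h * B (h + p + 1) - B h * A (h + p + 1)) * u
      + (A h * A (h + p + 1) - A (h + 1) * A (h + p)) = 0 := by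
  have key : ∀ k, (B (k + 1) * ξ k + B k) * u = A (k + 1) * ξ k + A k := by
    intro k
    induction k with
    | zero => simp [hA0, hA1, hB0, hB1, hξ0]
    | succ n ih =>
      have hne : ξ (n + 1) ≠ 0 := by
        have := hξgt (n + 1) (by omega)
        linarith
      have hr := hξrec n
      rw [hr] at ih
      have hA := hArec n
      have hB := hBrec n
      field_simp at ih
      rw [hA, hB]
      nlinarith [ih]
  have Eh := key h
  have Eg := key (h + p)
  rw [hξper] at Eg
  linear_combination (B (h + p + 1) * u - A (h + p + 1)) * Eh
    - (B (h + 1) * u - A (h + 1)) * Eg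
end

section
/- Let u be a quadratic irrational with minimal integer quadratic equation c1 + c2*u + c3*u^2 = 0 (gcd(c1,c2,c3)=1). Suppose integers (k1,k2,k3), not all zero, give a resonance k1*λ1 + k2*λ2 + k3*λ3 = 0 of the Bianchi IX eigenvalues at u. Then (k1,k2,k3) is an integer multiple of (c1 - c2 + c3, c1, c3). In particular, the minimal value of |k1|+|k2|+|k3| over all nonzero resonances equals |c1 - c2 + c3| + |c1| + |c3|, provided gcd(c1 - c2 + c3, c1, c3) = 1. -/
lemma lin_indep_aux (u : ℝ) (hirr : Irrational u) (p q : ℤ)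
    (h : (p : ℝ) + q * u = 0) : p = 0 ∧ q = 0 := by
  by_cases hq : q = 0
  · subst hq
    simp at h
    exact ⟨by exact_mod_cast h, rfl⟩
  · exfalso
    apply hirr
    refine ⟨(-p : ℚ) / q, ?_⟩
    have hq' : (q : ℝ) ≠ 0 := Int.cast_ne_zero.mpr hq
    push_cast
    field_simp
    linarith
lemma quad_unique_aux (u : ℝ) (hirr : Irrational u)
    (c1 c2 c3 : ℤ) (hgcd : Int.gcd c1 (Int.gcd c2 c3) = 1)
    (hc : (c1 : ℝ) + c2 * u + c3 * u ^ 2 = 0)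
    (a b c : ℤ) (h : (a : ℝ) + b * u + c * u ^ 2 = 0) :
    ∃ z : ℤ, a = z * c1 ∧ b = z * c2 ∧ c = z * c3 := by
  have hc3 : c3 ≠ 0 := by
    intro h3
    subst h3
    simp at hc
    obtain ⟨e1, e2⟩ := lin_indep_aux u hirr c1 c2 (by linarith)
    subst e1; subst e2
    simp at hgcd
  have hcomb : ((c3 * a - c * c1 : ℤ) : ℝ) + ((c3 * b - c * c2 : ℤ) : ℝ) * u = 0 := by
    push_cast
    linear_combination (c3:ℝ) * h - (c:ℝ) * hc
  obtain ⟨e1, e2⟩ := lin_indep_aux u hirr _ _ hcomb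
  have ha : c3 * a = c * c1 := by omega
  have hb : c3 * b = c * c2 := by omega
  set X := Int.gcdA c1 (Int.gcd c2 c3) with hX
  set Y := Int.gcdB c1 (Int.gcd c2 c3) with hY
  set A := Int.gcdA c2 c3 with hA
  set B := Int.gcdB c2 c3 with hB
  have h1 : (1 : ℤ) = c1 * X + (Int.gcd c2 c3 : ℤ) * Y := by
    have := Int.gcd_eq_gcd_ab c1 (Int.gcd c2 c3)
    rw [hgcd] at this
    exact_mod_cast this
  have hd : (Int.gcd c2 c3 : ℤ) = c2 * A + c3 * B := Int.gcd_eq_gcd_ab c2 c3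
  have hdvd : c = c3 * (X * a + A * Y * b + B * Y * c) := by
    have : c = c * (c1 * X + (Int.gcd c2 c3 : ℤ) * Y) := by rw [← h1]; ring
    rw [hd] at this
    linear_combination this - X * ha - A * Y * hb
  refine ⟨X * a + A * Y * b + B * Y * c, ?_, ?_, ?_⟩
  · refine mul_left_cancel₀ hc3 ?_
    linear_combination ha + c1 * hdvd
  · refine mul_left_cancel₀ hc3 ?_
    linear_combination hb + c2 * hdvd
  · linear_combination hdvd

theorem resonances_are_multiples_and_minimal_order
    (u : ℝ) (hu : 0 < u) (hirr : Irrational u)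
    (c1 c2 c3 : ℤ) (hgcd : Int.gcd c1 (Int.gcd c2 c3) = 1)
    (hc : (c1 : ℝ) + c2 * u + c3 * u ^ 2 = 0) :
    (∀ k1 k2 k3 : ℤ, ¬(k1 = 0 ∧ k2 = 0 ∧ k3 = 0) →
      ((k1 : ℝ) * (-6 * u / (1 + u + u ^ 2))
        + (k2 : ℝ) * (6 * (1 + u) / (1 + u + u ^ 2))
        + (k3 : ℝ) * (6 * u * (1 + u) / (1 + u + u ^ 2)) = 0) →
      ∃ z : ℤ, k1 = z * (c1 - c2 + c3) ∧ k2 = z * c1 ∧ k3 = z * c3) ∧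
    (Int.gcd (c1 - c2 + c3) (Int.gcd c1 c3) = 1 →
      IsLeast
        { n : ℤ | ∃ k1 k2 k3 : ℤ, ¬(k1 = 0 ∧ k2 = 0 ∧ k3 = 0) ∧
            ((k1 : ℝ) * (-6 * u / (1 + u + u ^ 2))
              + (k2 : ℝ) * (6 * (1 + u) / (1 + u + u ^ 2))
              + (k3 : ℝ) * (6 * u * (1 + u) / (1 + u + u ^ 2)) = 0) ∧
            n = |k1| + |k2| + |k3| }
        (|c1 - c2 + c3| + |c1| + |c3|)) := by
  have hD : (1 : ℝ) + u + u ^ 2 ≠ 0 := by nlinarith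
  have key : ∀ k1 k2 k3 : ℤ,
      ((k1 : ℝ) * (-6 * u / (1 + u + u ^ 2))
        + (k2 : ℝ) * (6 * (1 + u) / (1 + u + u ^ 2))
        + (k3 : ℝ) * (6 * u * (1 + u) / (1 + u + u ^ 2)) = 0) →
      ∃ z : ℤ, k1 = z * (c1 - c2 + c3) ∧ k2 = z * c1 ∧ k3 = z * c3 := by
    intro k1 k2 k3 hres
    have hres' : ((-6 * k1 * u + 6 * k2 * (1 + u) + 6 * k3 * (u * (1 + u))) : ℝ)
        / (1 + u + u ^ 2) = 0 := by rw [← hres]; ring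
    rw [div_eq_zero_iff] at hres'
    rcases hres' with hnum | hbad
    swap
    · exact absurd hbad hD
    have hpoly : ((k2 : ℤ) : ℝ) + ((k2 - k1 + k3 : ℤ) : ℝ) * u + ((k3 : ℤ) : ℝ) * u ^ 2 = 0 := by
      push_cast
      linear_combination hnum / 6
    obtain ⟨z, h2, hmid, h3⟩ := quad_unique_aux u hirr c1 c2 c3 hgcd hc _ _ _ hpoly
    exact ⟨z, by linear_combination h2 - hmid + h3, h2, h3⟩
  constructor
  · intro k1 k2 k3 _ hres
    exact key k1 k2 k3 hres
  · intro hg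
    constructor
    · refine ⟨c1 - c2 + c3, c1, c3, ?_, ?_, rfl⟩
      · rintro ⟨e1, e2, e3⟩
        rw [e1, e2, e3] at hg
        simp at hg
      · push_cast
        field_simp
        linear_combination 6 * hc
    · rintro n ⟨k1, k2, k3, hne, hres, hn⟩
      obtain ⟨z, e1, e2, e3⟩ := key k1 k2 k3 hres
      have hz : z ≠ 0 := by
        rintro rfl
        simp at e1 e2 e3
        exact hne ⟨e1, e2, e3⟩
      have hz1 : 1 ≤ |z| := Int.one_le_abs hz
      rw [hn, e1, e2, e3, abs_mul, abs_mul, abs_mul]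
      nlinarith [abs_nonneg (c1 - c2 + c3), abs_nonneg c1, abs_nonneg c3]
end

section
/- Let u = [3, 2, 3, 2, ...] (i.e., u = 3 + 1/(2 + 1/u), u > 1). Then u = (3 + √15)/2, and u satisfies 2u^2 - 6u - 3 = 0. Moreover for the base point m = 1 on the period-2 chain (u' = [1, 3, 2, 3, 2, ...]), the resonance triple (k1, k2, k3) = (7, 7, -2) satisfies 7*λ1(u') + 7*λ2(u') - 2*λ3(u') = 0 where λ_i are the Bianchi IX eigenvalues at u'. -/
theorem two_periodic_example_3_2
    (u : ℝ) (hu : 1 < u) (hcf : u = 3 + 1 / (2 + 1 / u))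
    (w : ℝ) (hw1 : 1 < w) (hwcf : w = 2 + 1 / (3 + 1 / w))
    (u' : ℝ) (hu' : u' = 1 + 1 / w) :
    u = (3 + Real.sqrt 15) / 2 ∧
    2 * u ^ 2 - 6 * u - 3 = 0 ∧
    7 * (-6 * u' / (1 + u' + u' ^ 2))
      + 7 * (6 * (1 + u') / (1 + u' + u' ^ 2))
      - 2 * (6 * u' * (1 + u') / (1 + u' + u' ^ 2)) = 0 := by
  have hu0 : u ≠ 0 := by positivity
  have hd : 2 + 1 / u ≠ 0 := by positivity
  have hpoly : 2 * u ^ 2 - 6 * u - 3 = 0 := by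
    field_simp at hcf
    nlinarith [hcf]
  have hw0 : w ≠ 0 := by positivity
  have hwd : 3 + 1 / w ≠ 0 := by positivity
  have hwpoly : 3 * w ^ 2 - 6 * w - 2 = 0 := by
    field_simp at hwcf
    nlinarith [hwcf]
  refine ⟨?_, hpoly, ?_⟩
  · have h32 : 0 ≤ 2 * u - 3 := by nlinarith
    have h15 : Real.sqrt 15 = 2 * u - 3 := by
      rw [show (15 : ℝ) = (2 * u - 3) ^ 2 by nlinarith]
      exact Real.sqrt_sq h32
    rw [h15]; ring
  · have hk : 2 * u' ^ 2 + 2 * u' - 7 = 0 := by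
      rw [hu']
      field_simp
      nlinarith [hwpoly]
    have hden : (0:ℝ) < 1 + u' + u' ^ 2 := by nlinarith [sq_nonneg (u' + 1/2)]
    field_simp
    nlinarith [hk]
end
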